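/- Let F be a field with char F ≠ 2 and char F ≠ 3, let α₁,α₄,β₂ ∈ F with α₄ ≠ 0, and let A = A₂(α₁,α₄,β₂) = [[α₁, 0, 0, α₄],[1, β₂, 1-α₁, 0]]. Then the only invertible 2×2 matrix g over F with gA = A(g⊗g) is the identity matrix, and the only 2×2 matrix D with DA = A(D⊗I₂ + I₂⊗D) is the zero matrix. -/
import Mathlib


open Matrix Kronecker

/-- The matrix of structure constants (MSC) of a 2-dimensional algebra, as a
`2 × (2 × 2)` matrix: the column indexed by `(j,k)` corresponds to the product
`e_j · e_k`, so the columns in order `(0,0), (0,1), (1,0), (1,1)` carry the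
entries `α₁ α₂ α₃ α₄` (first row) and `β₁ β₂ β₃ β₄` (second row). -/
def MSC {F : Type*} [Field F] (a1 a2 a3 a4 b1 b2 b3 b4 : F) :
    Matrix (Fin 2) (Fin 2 × Fin 2) F :=
  Matrix.of fun i j => !![a1, a2, a3, a4; b1, b2, b3, b4] i (finProdFinEquiv j)

/-- `g` is an automorphism matrix of the algebra with MSC `A`:
`g` is invertible and `g • A = A • (g ⊗ g)`. -/
def IsAutoMat {F : Type*} [Field F] (A : Matrix (Fin 2) (Fin 2 × Fin 2) F)
    (g : Matrix (Fin 2) (Fin 2) F) : Prop :=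
  IsUnit g ∧ g * A = A * (g ⊗ₖ g)

/-- `D` is a derivation matrix of the algebra with MSC `A`:
`D • A = A • (D ⊗ I + I ⊗ D)`. -/
def IsDerMat {F : Type*} [Field F] (A : Matrix (Fin 2) (Fin 2 × Fin 2) F)
    (D : Matrix (Fin 2) (Fin 2) F) : Prop :=
  D * A = A * (D ⊗ₖ (1 : Matrix (Fin 2) (Fin 2) F) + (1 : Matrix (Fin 2) (Fin 2) F) ⊗ₖ D)

theorem stmt_3 {F : Type*} [Field F] (h2 : ringChar F ≠ 2) (h3 : ringChar F ≠ 3)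
    (a1 a4 b2 : F) (ha4 : a4 ≠ 0)
    (A : Matrix (Fin 2) (Fin 2 × Fin 2) F)
    (hA : A = MSC a1 0 0 a4 1 b2 (1 - a1) 0) :
    (∀ g : Matrix (Fin 2) (Fin 2) F, IsAutoMat A g ↔ g = 1) ∧
    (∀ D : Matrix (Fin 2) (Fin 2) F, IsDerMat A D ↔ D = 0) := by
  subst hA
  set M := MSC a1 0 0 a4 1 b2 (1 - a1) 0 with hM
  have e1 : M 0 (0,0) = a1 := rfl
  have e2 : M 0 (0,1) = 0 := rfl
  have e3 : M 0 (1,0) = 0 := rfl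
  have e4 : M 0 (1,1) = a4 := rfl
  have e5 : M 1 (0,0) = 1 := rfl
  have e6 : M 1 (0,1) = b2 := rfl
  have e7 : M 1 (1,0) = 1 - a1 := rfl
  have e8 : M 1 (1,1) = 0 := rfl
  have h2' : (2 : F) ≠ 0 := Ring.two_ne_zero h2
  constructor
  · -- automorphisms
    intro g
    constructor
    · rintro ⟨hu, hg⟩
      have h : ∀ (i : Fin 2) (jk : Fin 2 × Fin 2), (g * M) i jk = (M * (g ⊗ₖ g)) i jk :=
        fun i jk => by rw [hg]
      have h1 := h 0 (0,0)
      have h2'' := h 0 (0,1)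
      have h3' := h 0 (1,0)
      have h4 := h 0 (1,1)
      have h5 := h 1 (0,0)
      have h6 := h 1 (0,1)
      have h7 := h 1 (1,0)
      have h8 := h 1 (1,1)
      simp only [Matrix.mul_apply, Fintype.sum_prod_type, Fin.sum_univ_two,
        kroneckerMap_apply, e1, e2, e3, e4, e5, e6, e7, e8] at h1 h2'' h3' h4 h5 h6 h7 h8
      have hdet : g 0 0 * g 1 1 - g 0 1 * g 1 0 ≠ 0 := by
        have := ((Matrix.isUnit_iff_isUnit_det g).mp hu).ne_zero
        rwa [Matrix.det_fin_two] at this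
      -- trace argument: (a-1)·det = 0
      have ka : (g 0 0 - 1) * (g 0 0 * g 1 1 - g 0 1 * g 1 0) = 0 := by
        linear_combination (-(g 1 1)) * h1 + g 1 0 * h3' + g 0 1 * h5 + (-(g 0 0)) * h7
      have kb : g 0 1 * (g 0 0 * g 1 1 - g 0 1 * g 1 0) = 0 := by
        linear_combination (-(g 1 1)) * h2'' + g 1 0 * h4 + g 0 1 * h6 + (-(g 0 0)) * h8
      have ha : g 0 0 = 1 := sub_eq_zero.mp ((mul_eq_zero.mp ka).resolve_right hdet)
      have hb : g 0 1 = 0 := (mul_eq_zero.mp kb).resolve_right hdet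
      rw [ha, hb] at h1
      have kc : a4 * (g 1 0 * g 1 0) = 0 := by linear_combination -h1
      have hc : g 1 0 = 0 :=
        mul_self_eq_zero.mp ((mul_eq_zero.mp kc).resolve_left ha4)
      rw [ha, hc] at h5
      have hd : g 1 1 = 1 := by linear_combination h5
      ext i j
      fin_cases i <;> fin_cases j <;>
        simp [ha, hb, hc, hd, Matrix.one_apply]
    · rintro rfl
      exact ⟨isUnit_one, by rw [Matrix.one_kronecker_one, Matrix.one_mul, Matrix.mul_one]⟩
  · -- derivations
    intro D
    constructor
    · intro hD
      unfold IsDerMat at hD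
      have h : ∀ (i : Fin 2) (jk : Fin 2 × Fin 2),
          (D * M) i jk = (M * (D ⊗ₖ (1 : Matrix (Fin 2) (Fin 2) F)
            + (1 : Matrix (Fin 2) (Fin 2) F) ⊗ₖ D)) i jk := fun i jk => by rw [hD]
      have d1 := h 0 (0,0)
      have d4 := h 0 (1,1)
      have d7 := h 1 (1,0)
      have d8 := h 1 (1,1)
      simp only [Matrix.mul_apply, Fintype.sum_prod_type, Fin.sum_univ_two,
        Matrix.add_apply, kroneckerMap_apply, Matrix.one_apply, e1, e2, e3, e4, e5, e6, e7, e8,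
        Fin.zero_eq_one_iff, Fin.one_eq_zero_iff, Nat.succ_succ_ne_one, OfNat.ofNat_ne_one,
        if_true, if_false, ite_true, ite_false, mul_one, mul_zero, one_mul, zero_mul,
        add_zero, zero_add, if_neg (by decide : ¬((0:Fin 2) = 1)),
        if_neg (by decide : ¬((1:Fin 2) = 0)), if_pos rfl] at d1 d4 d7 d8
      have ha : D 0 0 = 0 := by linear_combination -d1 - d7
      have hb : D 0 1 = 0 := by linear_combination d1 + a1 * ha
      have kd : a4 * (2 * D 1 1) = 0 := by linear_combination -d4 + a4 * ha
      have hd : D 1 1 = 0 := by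
        rcases mul_eq_zero.mp ((mul_eq_zero.mp kd).resolve_left ha4) with h | h
        · exact absurd h h2'
        · exact h
      have kc : a4 * D 1 0 = 0 := by linear_combination d8 + (b2 + (1 - a1)) * hb
      have hc : D 1 0 = 0 := (mul_eq_zero.mp kc).resolve_left ha4
      ext i j
      fin_cases i <;> fin_cases j <;> simp [ha, hb, hc, hd]
    · rintro rfl
      unfold IsDerMat
      rw [Matrix.zero_kronecker, Matrix.kronecker_zero, add_zero, Matrix.zero_mul,
        Matrix.mul_zero]
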